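/- Let a ∈ (0, 1) and z > 0, and define g(σ) = −1 / [ √(1+σ²) √(1−a²) ( √(1+σ²) + √(1−a²) ) ] for σ ∈ ℝ. Then ∫_{−∞}^{∞} e^{−z σ²} / [(σ² + a²)√(1+σ²)] dσ = (π / (a √(1−a²))) e^{z a²} erfc(a √z) + ∫_{−∞}^{∞} e^{−z σ²} g(σ) dσ, where erfc(x) = (2/√π) ∫_x^∞ e^{−t²} dt. -/

import Mathlib

open Real MeasureTheory Set

lemma exp_int (c : ℝ) (hc : 0 < c) : ∫ t in Ioi (0:ℝ), Real.exp (-c * t) = 1 / c := by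
  have := integral_comp_mul_left_Ioi (fun x => Real.exp (-x)) 0 hc
  simp only [mul_zero, integral_exp_neg_Ioi, neg_zero, Real.exp_zero, smul_eq_mul, mul_one] at this
  simp only [← neg_mul] at this
  rw [this, one_div]

lemma prod_integrable (a z : ℝ) (ha : 0 < a) (hz : 0 < z) :
    Integrable (fun p : ℝ × ℝ => Real.exp (-z * p.1 ^ 2) * Real.exp (-(p.1 ^ 2 + a ^ 2) * p.2))
      (volume.prod (volume.restrict (Ioi 0))) := by
  have hmeas : AEStronglyMeasurable
      (fun p : ℝ × ℝ => Real.exp (-z * p.1 ^ 2) * Real.exp (-(p.1 ^ 2 + a ^ 2) * p.2))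
      (volume.prod (volume.restrict (Ioi 0))) := by
    apply Continuous.aestronglyMeasurable
    fun_prop
  rw [integrable_prod_iff hmeas]
  constructor
  · refine ae_of_all _ fun σ => ?_
    have hc : 0 < σ ^ 2 + a ^ 2 := by positivity
    show Integrable (fun t => Real.exp (-z * σ ^ 2) * Real.exp (-(σ ^ 2 + a ^ 2) * t))
      (volume.restrict (Ioi 0))
    exact (exp_neg_integrableOn_Ioi 0 hc).const_mul _
  · have h1 : ∀ σ : ℝ, (∫ t in Ioi (0:ℝ),
        ‖Real.exp (-z * σ ^ 2) * Real.exp (-(σ ^ 2 + a ^ 2) * t)‖)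
        = Real.exp (-z * σ ^ 2) * (1 / (σ ^ 2 + a ^ 2)) := by
      intro σ
      have hc : 0 < σ ^ 2 + a ^ 2 := by positivity
      show (∫ t in Ioi (0:ℝ), ‖Real.exp (-z * σ ^ 2) * Real.exp (-(σ ^ 2 + a ^ 2) * t)‖) = _
      simp only [norm_mul, Real.norm_eq_abs, abs_of_pos (Real.exp_pos _)]
      rw [integral_const_mul, exp_int _ hc]
    simp only [h1]
    apply Integrable.mono (g := fun σ => Real.exp (-z * σ ^ 2) / a ^ 2)
      ((integrable_exp_neg_mul_sq hz).div_const _)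
    · apply Continuous.aestronglyMeasurable
      exact (by fun_prop : Continuous fun σ:ℝ => Real.exp (-z*σ^2)).mul
        (continuous_const.div (by fun_prop) (fun x => by positivity))
    · refine ae_of_all _ fun σ => ?_
      have hc : 0 < σ ^ 2 + a ^ 2 := by positivity
      rw [Real.norm_eq_abs, Real.norm_eq_abs, abs_of_nonneg (by positivity),
        abs_of_nonneg (by positivity), mul_one_div]
      gcongr
      nlinarith [sq_nonneg σ]

/-- The complementary error function `erfc(x) = (2/√π) ∫_x^∞ e^{-t²} dt`. -/
noncomputable def erfc (x : ℝ) : ℝ :=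
  2 / Real.sqrt Real.pi * ∫ t in Set.Ioi x, Real.exp (-t ^ 2)

lemma key_integral (a z : ℝ) (ha : 0 < a) (hz : 0 < z) :
    ∫ σ : ℝ, Real.exp (-z * σ ^ 2) / (σ ^ 2 + a ^ 2) =
      Real.pi / a * Real.exp (z * a ^ 2) * erfc (a * Real.sqrt z) := by
  have hswap := integral_integral_swap (μ := (volume : Measure ℝ))
    (ν := volume.restrict (Ioi 0))
    (f := fun σ t => Real.exp (-z * σ ^ 2) * Real.exp (-(σ ^ 2 + a ^ 2) * t))
    (prod_integrable a z ha hz)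
  -- LHS of hswap equals our LHS
  have hL : (∫ σ : ℝ, ∫ t in Ioi (0:ℝ),
      Real.exp (-z * σ ^ 2) * Real.exp (-(σ ^ 2 + a ^ 2) * t))
      = ∫ σ : ℝ, Real.exp (-z * σ ^ 2) / (σ ^ 2 + a ^ 2) := by
    congr 1 with σ
    have hc : 0 < σ ^ 2 + a ^ 2 := by positivity
    rw [integral_const_mul, exp_int _ hc, mul_one_div]
  -- RHS of hswap: inner Gaussian integral
  have hR : (∫ t in Ioi (0:ℝ), ∫ σ : ℝ,
      Real.exp (-z * σ ^ 2) * Real.exp (-(σ ^ 2 + a ^ 2) * t))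
      = ∫ t in Ioi (0:ℝ), Real.exp (-a ^ 2 * t) * Real.sqrt (Real.pi / (z + t)) := by
    refine setIntegral_congr_fun measurableSet_Ioi fun t ht => ?_
    have h1 : ∀ σ : ℝ, Real.exp (-z * σ ^ 2) * Real.exp (-(σ ^ 2 + a ^ 2) * t)
        = Real.exp (-a ^ 2 * t) * Real.exp (-(z + t) * σ ^ 2) := by
      intro σ
      rw [← Real.exp_add, ← Real.exp_add]
      ring_nf
    simp only [h1]
    rw [integral_const_mul, integral_gaussian]
  -- change of variables t = u^2 - z on Ioi √z
  have himg : (fun u : ℝ => u ^ 2 - z) '' Ioi (Real.sqrt z) = Ioi 0 := by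
    ext t
    simp only [mem_image, mem_Ioi]
    constructor
    · rintro ⟨u, hu, rfl⟩
      have h0 : 0 ≤ Real.sqrt z := Real.sqrt_nonneg z
      have : z < u ^ 2 := by
        have := Real.sq_sqrt hz.le
        nlinarith
      linarith
    · intro ht
      refine ⟨Real.sqrt (z + t), ?_, ?_⟩
      · exact (Real.sqrt_lt_sqrt hz.le (by linarith))
      · rw [Real.sq_sqrt (by linarith)]; ring
  have hderiv : ∀ u ∈ Ioi (Real.sqrt z),
      HasDerivWithinAt (fun u : ℝ => u ^ 2 - z) (2 * u) (Ioi (Real.sqrt z)) u := by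
    intro u _
    simpa using ((hasDerivAt_pow 2 u).sub_const z).hasDerivWithinAt
  have hinj : InjOn (fun u : ℝ => u ^ 2 - z) (Ioi (Real.sqrt z)) := by
    intro u hu v hv h
    simp only [mem_Ioi] at hu hv
    have h0 : 0 ≤ Real.sqrt z := Real.sqrt_nonneg z
    have h2 : u ^ 2 = v ^ 2 := by dsimp at h; linarith
    nlinarith
  have hcv := integral_image_eq_integral_abs_deriv_smul measurableSet_Ioi hderiv hinj
    (fun t => Real.exp (-a ^ 2 * t) * Real.sqrt (Real.pi / (z + t)))
  rw [himg] at hcv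
  have hsub : (∫ u in Ioi (Real.sqrt z),
      |2 * u| • (Real.exp (-a ^ 2 * (u ^ 2 - z)) * Real.sqrt (Real.pi / (z + (u ^ 2 - z)))))
      = ∫ u in Ioi (Real.sqrt z),
        (2 * Real.sqrt Real.pi * Real.exp (z * a ^ 2)) * Real.exp (-(a * u) ^ 2) := by
    refine setIntegral_congr_fun measurableSet_Ioi fun u hu => ?_
    have h0 : 0 < u := lt_of_le_of_lt (Real.sqrt_nonneg z) hu
    have h1 : z + (u ^ 2 - z) = u ^ 2 := by ring
    rw [smul_eq_mul, h1, abs_of_pos (by linarith : (0:ℝ) < 2 * u)]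
    have h2 : Real.sqrt (Real.pi / u ^ 2) = Real.sqrt Real.pi / u := by
      rw [Real.sqrt_div Real.pi_nonneg, Real.sqrt_sq h0.le]
    have h3 : Real.exp (-a ^ 2 * (u ^ 2 - z)) = Real.exp (z * a ^ 2) * Real.exp (-(a * u) ^ 2) := by
      rw [← Real.exp_add]; ring_nf
    rw [h2, h3]
    field_simp
  have hml := integral_comp_mul_left_Ioi (fun v => Real.exp (-v ^ 2)) (Real.sqrt z) ha
  have hpi : Real.sqrt Real.pi * Real.sqrt Real.pi = Real.pi :=
    Real.mul_self_sqrt Real.pi_nonneg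
  have hpi0 : (0:ℝ) < Real.sqrt Real.pi := Real.sqrt_pos.mpr Real.pi_pos
  rw [← hL, hswap, hR, hcv, hsub, integral_const_mul, hml, smul_eq_mul, erfc]
  field_simp
  linear_combination (∫ x in Ioi (a * Real.sqrt z), Real.exp (-x ^ 2)) * hpi

/-- splitting off the pole contribution in terms of `erfc`. -/
theorem stmt15 (a z : ℝ) (ha : a ∈ Set.Ioo (0 : ℝ) 1) (hz : 0 < z)
    (g : ℝ → ℝ)
    (hg : ∀ σ : ℝ, g σ =
      -1 / (Real.sqrt (1 + σ ^ 2) * Real.sqrt (1 - a ^ 2) *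
        (Real.sqrt (1 + σ ^ 2) + Real.sqrt (1 - a ^ 2)))) :
    ∫ σ : ℝ, Real.exp (-z * σ ^ 2) / ((σ ^ 2 + a ^ 2) * Real.sqrt (1 + σ ^ 2)) =
      Real.pi / (a * Real.sqrt (1 - a ^ 2)) * Real.exp (z * a ^ 2) *
          erfc (a * Real.sqrt z) +
        ∫ σ : ℝ, Real.exp (-z * σ ^ 2) * g σ := by
  obtain ⟨ha0, ha1⟩ := ha
  have ha2 : (0:ℝ) < 1 - a ^ 2 := by nlinarith
  have hb : 0 < Real.sqrt (1 - a ^ 2) := Real.sqrt_pos.mpr ha2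
  have hb2 : Real.sqrt (1 - a ^ 2) ^ 2 = 1 - a ^ 2 := Real.sq_sqrt ha2.le
  have hs1 : ∀ σ : ℝ, 1 ≤ Real.sqrt (1 + σ ^ 2) := by
    intro σ
    have h := Real.sqrt_le_sqrt (show (1:ℝ) ≤ 1 + σ ^ 2 by nlinarith)
    rwa [Real.sqrt_one] at h
  have hs2 : ∀ σ : ℝ, Real.sqrt (1 + σ ^ 2) ^ 2 = 1 + σ ^ 2 :=
    fun σ => Real.sq_sqrt (by positivity)
  have hint1 : Integrable (fun σ : ℝ => Real.exp (-z * σ ^ 2) / (σ ^ 2 + a ^ 2)) := by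
    apply Integrable.mono (g := fun σ => Real.exp (-z * σ ^ 2) / a ^ 2)
      ((integrable_exp_neg_mul_sq hz).div_const _)
    · apply Continuous.aestronglyMeasurable
      exact (by fun_prop : Continuous fun σ:ℝ => Real.exp (-z*σ^2)).div
        (by fun_prop) (fun σ => by positivity)
    · refine ae_of_all _ fun σ => ?_
      rw [Real.norm_eq_abs, Real.norm_eq_abs, abs_of_nonneg (by positivity),
        abs_of_nonneg (by positivity)]
      gcongr
      nlinarith [sq_nonneg σ]
  have hint2 : Integrable (fun σ : ℝ => Real.exp (-z * σ ^ 2) * g σ) := by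
    have hD : ∀ σ : ℝ, 0 < Real.sqrt (1 + σ ^ 2) * Real.sqrt (1 - a ^ 2) *
        (Real.sqrt (1 + σ ^ 2) + Real.sqrt (1 - a ^ 2)) := by
      intro σ
      have := hs1 σ
      positivity
    apply Integrable.mono (g := fun σ => Real.exp (-z * σ ^ 2) / (1 - a ^ 2))
      ((integrable_exp_neg_mul_sq hz).div_const _)
    · apply Continuous.aestronglyMeasurable
      have : (fun σ : ℝ => Real.exp (-z * σ ^ 2) * g σ) = fun σ =>
          Real.exp (-z * σ ^ 2) * (-1 / (Real.sqrt (1 + σ ^ 2) * Real.sqrt (1 - a ^ 2) *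
            (Real.sqrt (1 + σ ^ 2) + Real.sqrt (1 - a ^ 2)))) := by
        funext σ; rw [hg]
      rw [this]
      exact (by fun_prop : Continuous fun σ:ℝ => Real.exp (-z*σ^2)).mul
        (continuous_const.div (by fun_prop) (fun σ => (hD σ).ne'))
    · refine ae_of_all _ fun σ => ?_
      have h1 := hs1 σ
      have hDσ := hD σ
      have hle : 1 - a ^ 2 ≤ Real.sqrt (1 + σ ^ 2) * Real.sqrt (1 - a ^ 2) *
          (Real.sqrt (1 + σ ^ 2) + Real.sqrt (1 - a ^ 2)) := by
        nlinarith [hb, h1, hb2,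
          mul_le_mul_of_nonneg_right h1 (mul_pos hb hb).le,
          mul_nonneg (mul_nonneg (by linarith : (0:ℝ) ≤ Real.sqrt (1 + σ ^ 2))
            (by linarith : (0:ℝ) ≤ Real.sqrt (1 + σ ^ 2))) hb.le]
      rw [hg, Real.norm_eq_abs, Real.norm_eq_abs, abs_mul,
        abs_of_nonneg (Real.exp_pos _).le, abs_div, abs_neg, abs_one, abs_of_pos hDσ,
        abs_of_nonneg (by positivity : (0:ℝ) ≤ Real.exp (-z * σ ^ 2) / (1 - a ^ 2)),
        mul_one_div, div_le_div_iff₀ hDσ ha2]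
      exact mul_le_mul_of_nonneg_left hle (Real.exp_pos _).le
  have hpt : ∀ σ : ℝ, Real.exp (-z * σ ^ 2) / ((σ ^ 2 + a ^ 2) * Real.sqrt (1 + σ ^ 2))
      = (Real.sqrt (1 - a ^ 2))⁻¹ * (Real.exp (-z * σ ^ 2) / (σ ^ 2 + a ^ 2))
        + Real.exp (-z * σ ^ 2) * g σ := by
    intro σ
    have h1 := hs1 σ
    have h2 := hs2 σ
    have hc : (0:ℝ) < σ ^ 2 + a ^ 2 := by positivity
    have hspos : (0:ℝ) < Real.sqrt (1 + σ ^ 2) := by linarith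
    have hsb : (0:ℝ) < Real.sqrt (1 + σ ^ 2) + Real.sqrt (1 - a ^ 2) := by linarith
    rw [hg]
    field_simp
    linear_combination hb2 - h2
  calc ∫ σ : ℝ, Real.exp (-z * σ ^ 2) / ((σ ^ 2 + a ^ 2) * Real.sqrt (1 + σ ^ 2))
      = ∫ σ : ℝ, ((Real.sqrt (1 - a ^ 2))⁻¹ * (Real.exp (-z * σ ^ 2) / (σ ^ 2 + a ^ 2))
          + Real.exp (-z * σ ^ 2) * g σ) := by simp only [hpt]
    _ = (Real.sqrt (1 - a ^ 2))⁻¹ * (∫ σ : ℝ, Real.exp (-z * σ ^ 2) / (σ ^ 2 + a ^ 2))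
          + ∫ σ : ℝ, Real.exp (-z * σ ^ 2) * g σ := by
        rw [integral_add (hint1.const_mul _) hint2, integral_const_mul]
    _ = _ := by
        rw [key_integral a z ha0 hz]
        field_simp
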